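/- For any (1,β)-BM relation R, the set ψ_β(R) = ψ_β^{(1)}(R) ∪ ψ_β^{(2)}(R) has exactly 3 + 2β elements. -/

import Mathlib

set_option synthInstance.maxHeartbeats 1000000


open Set

/-- Signed letters: letter index together with a sign (`true` = positive). -/
abbrev V (n : ℕ) := Fin n × Bool

/-- Formal inversion of a signed letter. -/
def iv {n : ℕ} (x : V n) : V n := (x.1, !x.2)

/-- Oriented squares: tuples (a, b, a', b'). -/
abbrev Tup (α β : ℕ) := V α × V β × V α × V β

/-- The geometric square [aba'b'], as the set of its four representatives. -/
def square {α β : ℕ} (a : V α) (b : V β) (a' : V α) (b' : V β) : Set (Tup α β) :=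
  {(a, b, a', b'), (a', b', a, b), (iv a, iv b', iv a', iv b), (iv a', iv b, iv a, iv b')}

/-- The link of a set of geometric squares: the set of (horizontal, vertical)
edges contributed by the corners of the squares. -/
def link {α β : ℕ} (R : Set (Set (Tup α β))) : Set (V α × V β) :=
  {e | ∃ q ∈ R, ∃ t ∈ q, e = (iv t.1, t.2.1)}

/-- An (α,β)-BM relation: a set of α·β geometric squares whose link is the
complete bipartite graph K_{2α,2β}. -/
def IsBM (α β : ℕ) (R : Set (Set (Tup α β))) : Prop :=
  (∀ q ∈ R, ∃ a b a' b', q = square a b a' b') ∧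
  R.ncard = α * β ∧ link R = Set.univ

/-- Embedding of old vertical letters into the enlarged alphabet. -/
def up {β : ℕ} (b : V β) : V (β + 1) := (b.1.castSucc, b.2)

/-- The new vertical letter b_{β+1}. -/
def bn (β : ℕ) : V (β + 1) := (Fin.last β, true)

/-- Embedding of tuples along `up`. -/
def upT {α β : ℕ} (t : Tup α β) : Tup α (β + 1) :=
  (t.1, up t.2.1, t.2.2.1, up t.2.2.2)

/-- Embedding of a geometric square into the enlarged alphabet. -/
def upSq {α β : ℕ} (q : Set (Tup α β)) : Set (Tup α (β + 1)) := upT '' q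

/-- Embedding of a set of geometric squares into the enlarged alphabet. -/
def upR {α β : ℕ} (R : Set (Set (Tup α β))) : Set (Set (Tup α (β + 1))) := upSq '' R

/-- The generator a₁. -/
def a1 : V 1 := (0, true)

/-- ψ_β^{(1)}: adjoin one of the three squares involving only b_{β+1}. -/
def psi1 (β : ℕ) (R : Set (Set (Tup 1 β))) : Set (Set (Set (Tup 1 (β + 1)))) :=
  (fun s => upR R ∪ {s}) ''
    {square a1 (bn β) (iv a1) (iv (bn β)),
     square a1 (bn β) a1 (iv (bn β)),
     square a1 (bn β) (iv a1) (bn β)}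

/-- ψ_β^{(2)}: replace one square [aba'b'] of R by one of the two pairs
{[a b_{β+1} a' b'], [a b a' b_{β+1}⁻¹]} or {[a b_{β+1}⁻¹ a' b'], [a b a' b_{β+1}]}. -/
def psi2 (β : ℕ) (R : Set (Set (Tup 1 β))) : Set (Set (Set (Tup 1 (β + 1)))) :=
  {U | ∃ a b a' b', square a b a' b' ∈ R ∧
    (U = upR (R \ {square a b a' b'}) ∪
        {square a (bn β) a' (up b'), square a (up b) a' (iv (bn β))} ∨
     U = upR (R \ {square a b a' b'}) ∪
        {square a (iv (bn β)) a' (up b'), square a (up b) a' (bn β)})}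

/-- The map ψ_β. -/
def psi (β : ℕ) (R : Set (Set (Tup 1 β))) : Set (Set (Set (Tup 1 (β + 1)))) :=
  psi1 β R ∪ psi2 β R

@[simp] lemma iv_iv {n} (x : V n) : iv (iv x) = x := by simp [iv]
lemma iv_injective {n} : Function.Injective (iv (n := n)) :=
  Function.LeftInverse.injective iv_iv
@[simp] lemma iv_ne {n} (x : V n) : iv x ≠ x := by simp [iv, Prod.ext_iff]
@[simp] lemma ne_iv {n} (x : V n) : x ≠ iv x := (iv_ne x).symm
@[simp] lemma iv_up {β} (b : V β) : iv (up b) = up (iv b) := by simp [iv, up]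
lemma up_injective {β} : Function.Injective (up (β := β)) := by
  intro x y h; simpa [up, Prod.ext_iff, Fin.ext_iff] using h
@[simp] lemma up_ne_bn {β} (b : V β) : up b ≠ bn β := by
  simp [up, bn, Prod.ext_iff, Fin.ext_iff]; intro h; omega
@[simp] lemma bn_ne_up {β} (b : V β) : bn β ≠ up b := (up_ne_bn b).symm
@[simp] lemma up_ne_ivbn {β} (b : V β) : up b ≠ iv (bn β) := by
  simp [up, bn, iv, Prod.ext_iff, Fin.ext_iff]; intro h; omega
@[simp] lemma ivbn_ne_up {β} (b : V β) : iv (bn β) ≠ up b := (up_ne_ivbn b).symm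
@[simp] lemma bn_ne_ivbn {β} : bn β ≠ iv (bn β) := by simp [bn, iv]
@[simp] lemma ivbn_ne_bn {β} : iv (bn β) ≠ bn β := by simp [bn, iv]

lemma sq_swap {α β} (a : V α) (b : V β) (a' b') : square a b a' b' = square a' b' a b := by
  ext t; simp [square]; tauto
lemma sq_inv {α β} (a : V α) (b : V β) (a' b') :
    square a b a' b' = square (iv a) (iv b') (iv a') (iv b) := by
  ext t; simp [square]; tauto

def sqA (β : ℕ) (a : V 1) (b : V β) (a' : V 1) (b' : V β) : Set (Set (Tup 1 (β + 1))) :=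
  {square a (bn β) a' (up b'), square a (up b) a' (iv (bn β))}
def sqB (β : ℕ) (a : V 1) (b : V β) (a' : V 1) (b' : V β) : Set (Set (Tup 1 (β + 1))) :=
  {square a (iv (bn β)) a' (up b'), square a (up b) a' (bn β)}

lemma L1 {β} (a : V 1) (b : V β) (a' b') : sqA β a' b' a b = sqB β a b a' b' := by
  unfold sqA sqB
  rw [sq_swap a' (bn β) a (up b), sq_swap a' (up b') a (iv (bn β)), Set.pair_comm]
lemma L2 {β} (a : V 1) (b : V β) (a' b') :
    sqA β (iv a) (iv b') (iv a') (iv b) = sqA β a b a' b' := by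
  unfold sqA
  rw [show square (iv a) (bn β) (iv a') (up (iv b)) = square a (up b) a' (iv (bn β)) by
        rw [sq_inv a (up b) a' (iv (bn β))]; simp,
      show square (iv a) (up (iv b')) (iv a') (iv (bn β)) = square a (bn β) a' (up b') by
        rw [sq_inv a (bn β) a' (up b')]; simp,
      Set.pair_comm]
lemma L3 {β} (a : V 1) (b : V β) (a' b') :
    sqB β (iv a) (iv b') (iv a') (iv b) = sqB β a b a' b' := by
  rw [← L1, show sqA β (iv a') (iv b) (iv a) (iv b') = sqA β a' b' a b from L2 a' b' a b, L1]

lemma self_mem_square {α β} (a : V α) (b : V β) (a' b') : (a,b,a',b') ∈ square a b a' b' := by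
  simp [square]

lemma upT_injective {α β} : Function.Injective (upT (α := α) (β := β)) := by
  rintro ⟨x1,x2,x3,x4⟩ ⟨y1,y2,y3,y4⟩ h
  simp only [upT, Prod.mk.injEq] at h
  obtain ⟨h1,h2,h3,h4⟩ := h
  simp [up_injective h2, up_injective h4, h1, h3]

lemma upSq_injective {α β} : Function.Injective (upSq (α := α) (β := β)) :=
  fun _ _ h => (Set.image_injective.2 upT_injective) h

/-- a square whose second letter has index `last` is not an embedded square -/
lemma upSq_ne_sq₂ {β} (q : Set (Tup 1 β)) (x : V 1) (y : V (β+1)) (x' : V 1) (y' : V (β+1))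
    (h : y.1 = Fin.last β) : upSq q ≠ square x y x' y' := by
  intro hE
  have : (x,y,x',y') ∈ upSq q := hE ▸ self_mem_square x y x' y'
  obtain ⟨t, _, ht⟩ := this
  simp only [upT, Prod.mk.injEq] at ht
  have : (up t.2.1).1 = Fin.last β := by rw [ht.2.1]; exact h
  simp [up] at this

lemma upSq_ne_sq₄ {β} (q : Set (Tup 1 β)) (x : V 1) (y : V (β+1)) (x' : V 1) (y' : V (β+1))
    (h : y'.1 = Fin.last β) : upSq q ≠ square x y x' y' := by
  rw [sq_swap]; exact upSq_ne_sq₂ q x' y' x y h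

lemma DneB1 {β} (a a' : V 1) (b' : V β) :
    square a (bn β) a' (up b') ≠ square a (iv (bn β)) a' (up b') := by
  intro h
  have := h ▸ self_mem_square a (bn β) a' (up b')
  simp [square, iv, up, bn, Prod.ext_iff, Fin.ext_iff] at this
  obtain ⟨-, ⟨h1, -⟩, -⟩ := this
  have := b'.1.isLt
  omega

lemma DneB2 {β} (a a' : V 1) (b b' : V β)
    (h : square a (bn β) a' (up b') = square a (up b) a' (bn β)) : a = a' ∧ b = b' := by
  have := h ▸ self_mem_square a (bn β) a' (up b')
  simp [square, iv, up, bn, Prod.ext_iff, Fin.ext_iff] at this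
  have hb : (b.1 : ℕ) < β := b.1.isLt
  rcases this with ⟨⟨h1,-⟩,-⟩|⟨h1,-,h3,h4⟩|⟨-,⟨h1,-⟩,-⟩
  · omega
  · exact ⟨Prod.ext (Subsingleton.elim _ _) h1, Prod.ext (Fin.ext h3.symm) h4.symm⟩
  · omega

lemma s12 {β} : square a1 (bn β) (iv a1) (iv (bn β)) ≠ square a1 (bn β) a1 (iv (bn β)) := by
  intro h
  have := h ▸ self_mem_square a1 (bn β) (iv a1) (iv (bn β))
  simp only [square, iv, up, bn, a1, Set.mem_insert_iff, Set.mem_singleton_iff,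
    Prod.mk.injEq, Fin.ext_iff] at this
  simp at this

lemma s13 {β} : square a1 (bn β) (iv a1) (iv (bn β)) ≠ square a1 (bn β) (iv a1) (bn β) := by
  intro h
  have := h ▸ self_mem_square a1 (bn β) (iv a1) (iv (bn β))
  simp only [square, iv, up, bn, a1, Set.mem_insert_iff, Set.mem_singleton_iff,
    Prod.mk.injEq, Fin.ext_iff] at this
  simp at this

lemma s23 {β} : square a1 (bn β) a1 (iv (bn β)) ≠ square a1 (bn β) (iv a1) (bn β) := by
  intro h
  have := h ▸ self_mem_square a1 (bn β) a1 (iv (bn β))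
  simp only [square, iv, up, bn, a1, Set.mem_insert_iff, Set.mem_singleton_iff,
    Prod.mk.injEq, Fin.ext_iff] at this
  simp at this

lemma ncard_square_le {α β} (a : V α) (b : V β) (a' b') : (square a b a' b').ncard ≤ 4 := by
  unfold square
  refine le_trans (Set.ncard_insert_le _ _) ?_
  refine le_trans (Nat.add_le_add_right (Set.ncard_insert_le _ _) 1) ?_
  refine le_trans (Nat.add_le_add_right (Nat.add_le_add_right (Set.ncard_insert_le _ _) 1) 1) ?_
  simp

lemma ncard_biUnion_le {ι κ : Type*} [Finite κ] {s : Set ι} (hs : s.Finite) (f : ι → Set κ) (k : ℕ)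
    (hk : ∀ i ∈ s, (f i).ncard ≤ k) : (⋃ i ∈ s, f i).ncard ≤ k * s.ncard := by
  revert hk
  refine Set.Finite.induction_on
    (motive := fun s _ => (∀ i ∈ s, (f i).ncard ≤ k) → (⋃ i ∈ s, f i).ncard ≤ k * s.ncard) s hs
    (by simp) ?_
  intro a s ha hs ih hk
  rw [Set.biUnion_insert]
  calc (f a ∪ ⋃ i ∈ s, f i).ncard ≤ (f a).ncard + (⋃ i ∈ s, f i).ncard :=
        Set.ncard_union_le _ _
    _ ≤ k + k * s.ncard :=
        add_le_add (hk a (Set.mem_insert _ _)) (ih fun i hi => hk i (Set.mem_insert_of_mem _ hi))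
    _ = k * (insert a s).ncard := by rw [Set.ncard_insert_of_notMem ha hs]; ring

lemma noAbab {β : ℕ} {R : Set (Set (Tup 1 β))} (hR : IsBM 1 β R) (a : V 1) (b : V β) :
    square a b a b ∉ R := by
  intro hmem
  obtain ⟨hsq, hcard, hlink⟩ := hR
  set q0 : Set (Tup 1 β) := square a b a b with hq0
  set E : Set (Tup 1 β) → Set (V 1 × V β) := fun q => (fun t => (iv t.1, t.2.1)) '' q with hE
  have hlink2 : link R = ⋃ q ∈ R, E q := by
    ext e; simp [link, hE, eq_comm]
  have hq0pair : q0 = {((a,b,a,b) : Tup 1 β), (iv a, iv b, iv a, iv b)} := by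
    simp [hq0, square]
  have h2 : (E q0).ncard ≤ 2 := by
    rw [hq0pair]
    refine le_trans (Set.ncard_image_le (Set.toFinite _)) ?_
    refine le_trans (Set.ncard_insert_le _ _) (by simp)
  have hsplit : link R = E q0 ∪ ⋃ q ∈ R \ {q0}, E q := by
    rw [hlink2]
    ext e
    simp only [Set.mem_union, Set.mem_iUnion, Set.mem_diff, Set.mem_singleton_iff, exists_prop]
    constructor
    · rintro ⟨q, hq, he⟩
      rcases eq_or_ne q q0 with rfl | hne
      · exact Or.inl he
      · exact Or.inr ⟨q, ⟨hq, hne⟩, he⟩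
    · rintro (he | ⟨q, ⟨hq, -⟩, he⟩)
      exacts [⟨q0, hmem, he⟩, ⟨q, hq, he⟩]
  have hrest : (⋃ q ∈ R \ {q0}, E q).ncard ≤ 4 * (R \ {q0}).ncard := by
    refine ncard_biUnion_le (Set.toFinite _) _ 4 ?_
    intro q hq
    obtain ⟨c, d, c', d', rfl⟩ := hsq q hq.1
    exact le_trans (Set.ncard_image_le (Set.toFinite _)) (ncard_square_le c d c' d')
  have hdiff : (R \ {q0}).ncard = β - 1 := by
    rw [Set.ncard_diff_singleton_of_mem hmem, hcard]; omega
  have huniv : (Set.univ : Set (V 1 × V β)).ncard = 4 * β := by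
    rw [Set.ncard_univ, Nat.card_eq_fintype_card]
    simp [Fintype.card_prod]
    ring
  have hpos : 0 < β := b.1.pos
  have : (link R).ncard ≤ (E q0).ncard + (⋃ q ∈ R \ {q0}, E q).ncard := by
    rw [hsplit]; exact Set.ncard_union_le _ _
  rw [hlink, huniv] at this
  omega

lemma sq_rep_cases {β : ℕ} {a c a' c' : V 1} {b d b' d' : V β}
    (h : square a b a' b' = square c d c' d') :
    (sqA β c d c' d' = sqA β a b a' b' ∧ sqB β c d c' d' = sqB β a b a' b') ∨
    (sqA β c d c' d' = sqB β a b a' b' ∧ sqB β c d c' d' = sqA β a b a' b') := by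
  have hm : ((c, d, c', d') : Tup 1 β) ∈ square a b a' b' := by
    rw [h]; exact self_mem_square c d c' d'
  simp only [square, Set.mem_insert_iff, Set.mem_singleton_iff, Prod.mk.injEq] at hm
  rcases hm with ⟨h1, h2, h3, h4⟩ | ⟨h1, h2, h3, h4⟩ | ⟨h1, h2, h3, h4⟩ | ⟨h1, h2, h3, h4⟩ <;>
    rw [h1, h2, h3, h4]
  · exact Or.inl ⟨rfl, rfl⟩
  · exact Or.inr ⟨L1 a b a' b', (L1 a' b' a b).symm⟩
  · exact Or.inl ⟨L2 a b a' b', L3 a b a' b'⟩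
  · exact Or.inr ⟨(L2 a' b' a b).trans (L1 a b a' b'), (L3 a' b' a b).trans (L1 a' b' a b).symm⟩

open Classical in
noncomputable def fq (β : ℕ) (R : Set (Set (Tup 1 β))) (q : Set (Tup 1 β)) (s : Bool) :
    Set (Set (Tup 1 (β + 1))) :=
  if h : ∃ p : V 1 × V β × V 1 × V β, q = square p.1 p.2.1 p.2.2.1 p.2.2.2 then
    upR (R \ {q}) ∪
      (if s then sqA β h.choose.1 h.choose.2.1 h.choose.2.2.1 h.choose.2.2.2
       else sqB β h.choose.1 h.choose.2.1 h.choose.2.2.1 h.choose.2.2.2)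
  else ∅

lemma fq_spec {β : ℕ} (R : Set (Set (Tup 1 β))) {q : Set (Tup 1 β)} (a : V 1) (b : V β)
    (a' : V 1) (b' : V β) (hq : q = square a b a' b') :
    (fq β R q true = upR (R \ {q}) ∪ sqA β a b a' b' ∧
     fq β R q false = upR (R \ {q}) ∪ sqB β a b a' b') ∨
    (fq β R q true = upR (R \ {q}) ∪ sqB β a b a' b' ∧
     fq β R q false = upR (R \ {q}) ∪ sqA β a b a' b') := by
  have hex : ∃ p : V 1 × V β × V 1 × V β, q = square p.1 p.2.1 p.2.2.1 p.2.2.2 :=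
    ⟨(a, b, a', b'), hq⟩
  have hspec := hex.choose_spec
  have hcases := sq_rep_cases (hq.symm.trans hspec)
  unfold fq
  rw [dif_pos hex, dif_pos hex, if_pos rfl, if_neg (by simp)]
  rcases hcases with ⟨hA, hB⟩ | ⟨hA, hB⟩
  · exact Or.inl ⟨by rw [hA], by rw [hB]⟩
  · exact Or.inr ⟨by rw [hA], by rw [hB]⟩

lemma D_notin_upR {β : ℕ} (a a' : V 1) (b' : V β) (S : Set (Set (Tup 1 β))) :
    square a (bn β) a' (up b') ∉ upR S := by
  rintro ⟨q'', -, hEq⟩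
  exact upSq_ne_sq₂ q'' a (bn β) a' (up b') rfl hEq

lemma upSq_notin_sqA {β : ℕ} (q : Set (Tup 1 β)) (a : V 1) (b : V β) (a' b') :
    upSq q ∉ sqA β a b a' b' := by
  rintro (h | h)
  · exact upSq_ne_sq₂ q a (bn β) a' (up b') rfl h
  · exact upSq_ne_sq₄ q a (up b) a' (iv (bn β)) rfl h

lemma upSq_notin_sqB {β : ℕ} (q : Set (Tup 1 β)) (a : V 1) (b : V β) (a' b') :
    upSq q ∉ sqB β a b a' b' := by
  rintro (h | h)
  · exact upSq_ne_sq₂ q a (iv (bn β)) a' (up b') rfl h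
  · exact upSq_ne_sq₄ q a (up b) a' (bn β) rfl h

lemma upSq_notin_upR_diff {β : ℕ} {q : Set (Tup 1 β)} {S : Set (Set (Tup 1 β))} :
    upSq q ∉ upR (S \ {q}) := by
  rintro ⟨q'', hq'', hEq⟩
  exact hq''.2 (upSq_injective hEq)

/-- the distinguishing square for cross-`q` separation -/
lemma upSq_mem_fq {β : ℕ} (R : Set (Set (Tup 1 β))) {q q' : Set (Tup 1 β)} (hq' : q' ∈ R)
    (hne : q' ≠ q) (a : V 1) (b : V β) (a' : V 1) (b' : V β) (hq : q = square a b a' b')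
    (s : Bool) : upSq q' ∈ fq β R q s := by
  rcases fq_spec R a b a' b' hq with ⟨h1, h2⟩ | ⟨h1, h2⟩ <;> cases s <;>
    simp only [h1, h2] <;>
    exact Or.inl ⟨q', ⟨hq', hne⟩, rfl⟩

lemma upSq_notin_fq {β : ℕ} (R : Set (Set (Tup 1 β))) {q : Set (Tup 1 β)}
    (a : V 1) (b : V β) (a' : V 1) (b' : V β) (hq : q = square a b a' b') (s : Bool) :
    upSq q ∉ fq β R q s := by
  rcases fq_spec R a b a' b' hq with ⟨h1, h2⟩ | ⟨h1, h2⟩ <;> cases s <;>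
    simp only [h1, h2] <;> rintro (h | h)
  · exact upSq_notin_upR_diff h
  · exact upSq_notin_sqB q a b a' b' h
  · exact upSq_notin_upR_diff h
  · exact upSq_notin_sqA q a b a' b' h
  · exact upSq_notin_upR_diff h
  · exact upSq_notin_sqA q a b a' b' h
  · exact upSq_notin_upR_diff h
  · exact upSq_notin_sqB q a b a' b' h

lemma baseA_ne_baseB {β : ℕ} {R : Set (Set (Tup 1 β))} (hR : IsBM 1 β R)
    {q : Set (Tup 1 β)} (hqR : q ∈ R) (a : V 1) (b : V β) (a' : V 1) (b' : V β)
    (hq : q = square a b a' b') :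
    upR (R \ {q}) ∪ sqA β a b a' b' ≠ upR (R \ {q}) ∪ sqB β a b a' b' := by
  intro hEq
  have hD : square a (bn β) a' (up b') ∈ upR (R \ {q}) ∪ sqA β a b a' b' :=
    Or.inr (Or.inl rfl)
  rw [hEq] at hD
  rcases hD with h | h | h
  · exact D_notin_upR a a' b' _ h
  · exact DneB1 a a' b' h
  · obtain ⟨rfl, rfl⟩ := DneB2 a a' b b' h
    exact noAbab hR a b (hq ▸ hqR)

lemma psi2_eq_image {β : ℕ} {R : Set (Set (Tup 1 β))} (hR : IsBM 1 β R) :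
    psi2 β R = (fun p : Set (Tup 1 β) × Bool => fq β R p.1 p.2) ''
      (R ×ˢ (Set.univ : Set Bool)) := by
  ext U
  constructor
  · rintro ⟨a, b, a', b', hmem, hU | hU⟩
    · rcases fq_spec R a b a' b' rfl with ⟨h1, -⟩ | ⟨-, h2⟩
      · exact ⟨(square a b a' b', true), ⟨hmem, trivial⟩, by show fq β R _ true = U; rw [h1]; exact hU.symm⟩
      · exact ⟨(square a b a' b', false), ⟨hmem, trivial⟩, by show fq β R _ false = U; rw [h2]; exact hU.symm⟩
    · rcases fq_spec R a b a' b' rfl with ⟨-, h2⟩ | ⟨h1, -⟩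
      · exact ⟨(square a b a' b', false), ⟨hmem, trivial⟩, by show fq β R _ false = U; rw [h2]; exact hU.symm⟩
      · exact ⟨(square a b a' b', true), ⟨hmem, trivial⟩, by show fq β R _ true = U; rw [h1]; exact hU.symm⟩
  · rintro ⟨⟨q, s⟩, ⟨hq, -⟩, rfl⟩
    obtain ⟨a, b, a', b', hqeq⟩ := hR.1 q hq
    refine ⟨a, b, a', b', hqeq ▸ hq, ?_⟩
    rcases fq_spec R a b a' b' hqeq with ⟨h1, h2⟩ | ⟨h1, h2⟩ <;> cases s
    · exact Or.inr (by show fq β R q false = _; rw [h2, hqeq]; rfl)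
    · exact Or.inl (by show fq β R q true = _; rw [h1, hqeq]; rfl)
    · exact Or.inl (by show fq β R q false = _; rw [h2, hqeq]; rfl)
    · exact Or.inr (by show fq β R q true = _; rw [h1, hqeq]; rfl)

lemma fq_injOn {β : ℕ} {R : Set (Set (Tup 1 β))} (hR : IsBM 1 β R) :
    Set.InjOn (fun p : Set (Tup 1 β) × Bool => fq β R p.1 p.2)
      (R ×ˢ (Set.univ : Set Bool)) := by
  rintro ⟨q, s⟩ ⟨hq, -⟩ ⟨q', s'⟩ ⟨hq', -⟩ hEq
  simp only at hEq
  obtain ⟨a, b, a', b', hqeq⟩ := hR.1 q hq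
  obtain ⟨c, d, c', d', hqeq'⟩ := hR.1 q' hq'
  have hqq : q = q' := by
    by_contra hne
    have h1 : upSq q' ∈ fq β R q s := upSq_mem_fq R hq' (Ne.symm hne) a b a' b' hqeq s
    rw [hEq] at h1
    exact upSq_notin_fq R c d c' d' hqeq' s' h1
  subst hqq
  suffices hss : s = s' by rw [hss]
  have hAB := baseA_ne_baseB hR hq a b a' b' hqeq
  cases s <;> cases s' <;> try rfl
  all_goals exfalso
  all_goals rcases fq_spec R a b a' b' hqeq with ⟨h1, h2⟩ | ⟨h1, h2⟩ <;>
    rw [h1, h2] at hEq <;>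
    first
      | exact hAB hEq
      | exact hAB hEq.symm

lemma ncard_psi2 {β : ℕ} {R : Set (Set (Tup 1 β))} (hR : IsBM 1 β R) :
    (psi2 β R).ncard = 2 * β := by
  have hbool : Nat.card ↥(Set.univ : Set Bool) = 2 := by
    rw [Nat.card_congr (Equiv.Set.univ Bool), Nat.card_eq_fintype_card, Fintype.card_bool]
  rw [psi2_eq_image hR, Set.ncard_image_of_injOn (fq_injOn hR), ← Nat.card_coe_set_eq,
    Nat.card_congr (Equiv.Set.prod _ _), Nat.card_prod, hbool, Nat.card_coe_set_eq, hR.2.1]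
  ring

lemma bn_sq_notin_upR {β : ℕ} (x x' : V 1) (y' : V (β + 1)) (S : Set (Set (Tup 1 β))) :
    square x (bn β) x' y' ∉ upR S := by
  rintro ⟨q, -, h⟩
  exact upSq_ne_sq₂ q x (bn β) x' y' rfl h

lemma ncard_psi1 {β : ℕ} (R : Set (Set (Tup 1 β))) : (psi1 β R).ncard = 3 := by
  rw [psi1, Set.ncard_image_of_injOn ?_]
  · rw [Set.ncard_insert_of_notMem (by simp [s12, s13]),
      Set.ncard_insert_of_notMem (by simp [s23]), Set.ncard_singleton]
  · intro u hu v hv hEq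
    simp only at hEq
    have hmem : u ∈ upR R ∪ {v} := by rw [← hEq]; exact Or.inr rfl
    rcases hmem with h | h
    · exfalso
      rcases hu with rfl | rfl | rfl <;> exact bn_sq_notin_upR _ _ _ R h
    · exact h

lemma psi_disjoint {β : ℕ} (R : Set (Set (Tup 1 β))) : Disjoint (psi1 β R) (psi2 β R) := by
  rw [Set.disjoint_left]
  rintro X ⟨s, hs, rfl⟩ hX2
  obtain ⟨a, b, a', b', hmem, hU⟩ := hX2
  simp only at hU
  have hq : upSq (square a b a' b') ∈ upR R ∪ {s} := Or.inl ⟨_, hmem, rfl⟩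
  rcases hU with hU | hU <;> rw [hU] at hq <;> rcases hq with h | h | h
  · exact upSq_notin_upR_diff h
  · exact upSq_ne_sq₂ _ a (bn β) a' (up b') rfl h
  · exact upSq_ne_sq₄ _ a (up b) a' (iv (bn β)) rfl h
  · exact upSq_notin_upR_diff h
  · exact upSq_ne_sq₂ _ a (iv (bn β)) a' (up b') rfl h
  · exact upSq_ne_sq₄ _ a (up b) a' (bn β) rfl h

/-- For any (1,β)-BM relation R, the set ψ_β(R) has exactly 3 + 2β elements. -/
theorem psi_card {β : ℕ} (R : Set (Set (Tup 1 β))) (hR : IsBM 1 β R) :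
    (psi β R).ncard = 3 + 2 * β := by
  rw [psi, Set.ncard_union_eq (psi_disjoint R) (Set.toFinite _) (Set.toFinite _),
    ncard_psi1, ncard_psi2 hR]
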